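/- Let γ be a modular bridge from Ω_A to Ω_B. For every ε > 0 there exists a modular bridge γ_ε from Ω_A to Ω_B, with the same unital C*-algebra D, pivot x, and unital *-monomorphisms π_A, π_B as γ, whose families of anchors and co-anchors are finite, and such that λ(γ_ε) ≤ λ(γ) + ε. -/

import Mathlib

open scoped ComplexOrder

noncomputable section

/-! ### Admissible functions -/

/-- A function `F : [0,∞)⁴ → [0,∞)` is admissible when it is nondecreasing in each argument
and dominates `x₁x₃ + x₂x₄`. -/
def Admissible (F : ℝ → ℝ → ℝ → ℝ → ℝ) : Prop :=
  (∀ x₁ x₂ x₃ x₄ y₁ y₂ y₃ y₄ : ℝ, 0 ≤ x₁ → 0 ≤ x₂ → 0 ≤ x₃ → 0 ≤ x₄ →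
      x₁ ≤ y₁ → x₂ ≤ y₂ → x₃ ≤ y₃ → x₄ ≤ y₄ → F x₁ x₂ x₃ x₄ ≤ F y₁ y₂ y₃ y₄) ∧
  (∀ x₁ x₂ x₃ x₄ : ℝ, 0 ≤ x₁ → 0 ≤ x₂ → 0 ≤ x₃ → 0 ≤ x₄ →
      x₁ * x₃ + x₂ * x₄ ≤ F x₁ x₂ x₃ x₄)

/-- An admissible triple `(F,G,H)`. -/
def AdmissibleTriple (F : ℝ → ℝ → ℝ → ℝ → ℝ) (G : ℝ → ℝ → ℝ → ℝ) (H : ℝ → ℝ → ℝ) : Prop :=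
  Admissible F ∧
  (∀ x y z x' y' z' : ℝ, 0 ≤ x → 0 ≤ y → 0 ≤ z → x ≤ x' → y ≤ y' → z ≤ z' →
      G x y z ≤ G x' y' z') ∧
  (∀ x y z : ℝ, 0 ≤ x → 0 ≤ y → 0 ≤ z → (x + y) * z ≤ G x y z) ∧
  (∀ x y x' y' : ℝ, 0 ≤ x → 0 ≤ y → x ≤ x' → y ≤ y' → H x y ≤ H x' y') ∧
  (∀ x y : ℝ, 0 ≤ x → 0 ≤ y → 2 * x * y ≤ H x y)

section ReIm

variable {A : Type*} [NormedRing A] [StarRing A] [NormedAlgebra ℂ A]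

/-- The real part `(a + a*)/2` of an element of a complex `*`-algebra. -/
def reEl (a : A) : A := (2⁻¹ : ℂ) • (a + star a)

/-- The imaginary part `(a - a*)/(2i)` of an element of a complex `*`-algebra. -/
def imEl (a : A) : A := ((2 * Complex.I)⁻¹ : ℂ) • (a - star a)

end ReIm

/-! ### States -/

/-- A state on a unital complex `*`-algebra: a linear functional which is unital
and positive. -/
structure CState (A : Type*) [NormedRing A] [StarRing A] [NormedAlgebra ℂ A] where
  toFun : A →ₗ[ℂ] ℂ
  map_one : toFun 1 = 1
  positive : ∀ a : A, 0 ≤ toFun (star a * a)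

/-- The topology induced by a distance function, generated by its open balls. -/
def ballTopology {X : Type*} (d : X → X → ℝ) : TopologicalSpace X :=
  TopologicalSpace.generateFrom {s | ∃ (x : X) (ε : ℝ), 0 < ε ∧ s = {y | d x y < ε}}

/-- The Hausdorff distance between two sets, relative to a distance function. -/
def hausDist {X : Type*} (d : X → X → ℝ) (S T : Set X) : ℝ :=
  max (sSup {r | ∃ x ∈ S, r = sInf {s | ∃ y ∈ T, s = d x y}})
      (sSup {r | ∃ y ∈ T, r = sInf {s | ∃ x ∈ S, s = d x y}})

/-- The diameter of a set relative to a distance function. -/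
def setDiam {X : Type*} (d : X → X → ℝ) (S : Set X) : ℝ :=
  sSup {r | ∃ x ∈ S, ∃ y ∈ S, r = d x y}

/-- The weak-* topology on the state space. -/
def stateWeakTopology (A : Type*) [NormedRing A] [StarRing A] [NormedAlgebra ℂ A] :
    TopologicalSpace (CState A) :=
  TopologicalSpace.induced (fun (φ : CState A) (a : A) => φ.toFun a) Pi.topologicalSpace

/-- The Monge-Kantorovich metric associated with a Lipschitz seminorm `L` with domain `dom`. -/
def mkDist {A : Type*} [NormedRing A] [StarRing A] [NormedAlgebra ℂ A]
    (dom : Set A) (L : A → ℝ) (φ ψ : CState A) : ℝ :=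
  sSup {r | ∃ a ∈ dom, L a ≤ 1 ∧ r = ‖φ.toFun a - ψ.toFun a‖}

/-- The 1-level set of a pivot is nonempty. -/
def pivotLevelNonempty {D : Type*} [NormedRing D] [StarRing D] [NormedAlgebra ℂ D]
    (x : D) : Prop :=
  ∃ φ : CState D,
    φ.toFun (star (1 - x) * (1 - x)) = 0 ∧ φ.toFun ((1 - x) * star (1 - x)) = 0

/-! ### Quasi-Leibniz quantum compact metric spaces -/

/-- An `F`-quasi-Leibniz quantum compact metric space structure on a unital C*-algebra `A`:
a Lipschitz seminorm `L` defined on a dense Jordan-Lie subalgebra `dom` of the self-adjoint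
part of `A`, vanishing exactly on `ℝ1`, lower semicontinuous, whose Monge-Kantorovich metric
metrizes the weak-* topology on the state space, and satisfying the `F`-quasi-Leibniz
inequality. -/
structure QLSpace (A : Type*) [NormedRing A] [StarRing A] [CStarRing A]
    [NormedAlgebra ℂ A] [StarModule ℂ A] [CompleteSpace A]
    (F : ℝ → ℝ → ℝ → ℝ → ℝ) where
  dom : Set A
  L : A → ℝ
  dom_selfAdjoint : ∀ a ∈ dom, IsSelfAdjoint a
  dom_dense : closure dom = {a : A | IsSelfAdjoint a}
  dom_add : ∀ a ∈ dom, ∀ b ∈ dom, a + b ∈ dom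
  dom_smul : ∀ (t : ℝ), ∀ a ∈ dom, (t : ℂ) • a ∈ dom
  dom_jordan : ∀ a ∈ dom, ∀ b ∈ dom, (2⁻¹ : ℂ) • (a * b + b * a) ∈ dom
  dom_lie : ∀ a ∈ dom, ∀ b ∈ dom, ((2 * Complex.I)⁻¹ : ℂ) • (a * b - b * a) ∈ dom
  one_mem : (1 : A) ∈ dom
  L_nonneg : ∀ a : A, 0 ≤ L a
  L_add : ∀ a ∈ dom, ∀ b ∈ dom, L (a + b) ≤ L a + L b
  L_smul : ∀ (t : ℝ), ∀ a ∈ dom, L ((t : ℂ) • a) = |t| * L a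
  L_eq_zero_iff : ∀ a ∈ dom, (L a = 0 ↔ ∃ t : ℝ, a = (t : ℂ) • (1 : A))
  lowerSemicontinuous : IsClosed {a : A | a ∈ dom ∧ L a ≤ 1}
  leibniz_jordan : ∀ a ∈ dom, ∀ b ∈ dom,
      L ((2⁻¹ : ℂ) • (a * b + b * a)) ≤ F ‖a‖ ‖b‖ (L a) (L b)
  leibniz_lie : ∀ a ∈ dom, ∀ b ∈ dom,
      L (((2 * Complex.I)⁻¹ : ℂ) • (a * b - b * a)) ≤ F ‖a‖ ‖b‖ (L a) (L b)
  mk_metrizes : ballTopology (mkDist dom L) = stateWeakTopology A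
/-! ### Metrized quantum vector bundles -/

/-- An `(F,G,H)`-metrized quantum vector bundle: a left Hilbert module `M` over a unital
C*-algebra `A` equipped with an `F`-quasi-Leibniz quantum compact metric space structure,
together with a D-norm `D` defined on a dense subspace `Ddom` of `M`, dominating the
C*-Hilbert norm, with compact unit ball, and satisfying the inner and modular quasi-Leibniz
inequalities with respect to `G` and `H`. -/
structure BundledMQVB (F : ℝ → ℝ → ℝ → ℝ → ℝ) (G : ℝ → ℝ → ℝ → ℝ) (H : ℝ → ℝ → ℝ) where
  A : Type
  [instRing : NormedRing A]
  [instStarRing : StarRing A]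
  [instCStar : CStarRing A]
  [instAlg : NormedAlgebra ℂ A]
  [instStarMod : StarModule ℂ A]
  [instComplete : CompleteSpace A]
  M : Type
  [instM : NormedAddCommGroup M]
  [instMC : Module ℂ M]
  [instMA : Module A M]
  [instTower : IsScalarTower ℂ A M]
  [instMComplete : CompleteSpace M]
  base : QLSpace A F
  inn : M → M → A
  Ddom : Set M
  D : M → ℝ
  inn_add_left : ∀ x y z : M, inn (x + y) z = inn x z + inn y z
  inn_smul_left : ∀ (a : A) (x y : M), inn (a • x) y = a * inn x y
  inn_smul_leftC : ∀ (c : ℂ) (x y : M), inn (c • x) y = c • inn x y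
  inn_star : ∀ x y : M, star (inn x y) = inn y x
  inn_pos : ∀ x : M, ∃ b : A, inn x x = star b * b
  inn_definite : ∀ x : M, inn x x = 0 → x = 0
  norm_eq : ∀ x : M, ‖x‖ = Real.sqrt ‖inn x x‖
  Ddom_dense : Dense Ddom
  Ddom_add : ∀ x ∈ Ddom, ∀ y ∈ Ddom, x + y ∈ Ddom
  Ddom_smul : ∀ (c : ℂ), ∀ x ∈ Ddom, c • x ∈ Ddom
  D_nonneg : ∀ x : M, 0 ≤ D x
  D_add : ∀ x ∈ Ddom, ∀ y ∈ Ddom, D (x + y) ≤ D x + D y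
  D_smul : ∀ (c : ℂ), ∀ x ∈ Ddom, D (c • x) = ‖c‖ * D x
  norm_le_D : ∀ x ∈ Ddom, ‖x‖ ≤ D x
  D_ball_compact : IsCompact {x : M | x ∈ Ddom ∧ D x ≤ 1}
  D_leibniz : ∀ a ∈ base.dom, ∀ x ∈ Ddom,
      a • x ∈ Ddom ∧ D (a • x) ≤ G ‖a‖ (base.L a) (D x)
  inn_leibniz : ∀ x ∈ Ddom, ∀ y ∈ Ddom,
      reEl (inn x y) ∈ base.dom ∧ imEl (inn x y) ∈ base.dom ∧
      base.L (reEl (inn x y)) ≤ H (D x) (D y) ∧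
      base.L (imEl (inn x y)) ≤ H (D x) (D y)

attribute [instance] BundledMQVB.instRing BundledMQVB.instStarRing BundledMQVB.instCStar
  BundledMQVB.instAlg BundledMQVB.instStarMod BundledMQVB.instComplete
  BundledMQVB.instM BundledMQVB.instMC BundledMQVB.instMA BundledMQVB.instTower
  BundledMQVB.instMComplete

variable {F : ℝ → ℝ → ℝ → ℝ → ℝ} {G : ℝ → ℝ → ℝ → ℝ} {H : ℝ → ℝ → ℝ}

/-- The closed ball of radius `r` for the D-norm of a metrized quantum vector bundle. -/
def BundledMQVB.Dball (Ω : BundledMQVB F G H) (r : ℝ) : Set Ω.M :=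
  {ω | ω ∈ Ω.Ddom ∧ Ω.D ω ≤ r}

/-- The modular Monge-Kantorovich metric of a metrized quantum vector bundle. -/
def BundledMQVB.mkD (Ω : BundledMQVB F G H) (x y : Ω.M) : ℝ :=
  sSup {r | ∃ ξ ∈ Ω.Ddom, Ω.D ξ ≤ 1 ∧ r = ‖Ω.inn x ξ - Ω.inn y ξ‖}

/-- The `A`-weak topology on the module of a metrized quantum vector bundle. -/
def BundledMQVB.aWeak (Ω : BundledMQVB F G H) : TopologicalSpace Ω.M :=
  TopologicalSpace.induced (fun (ω : Ω.M) (ξ : Ω.M) => Ω.inn ω ξ) Pi.topologicalSpace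
/-! ### Modular bridges -/

/-- A modular bridge between two metrized quantum vector bundles. -/
structure ModularBridge (ΩA ΩB : BundledMQVB F G H) where
  Dalg : Type
  [instDRing : NormedRing Dalg]
  [instDStarRing : StarRing Dalg]
  [instDCStar : CStarRing Dalg]
  [instDAlg : NormedAlgebra ℂ Dalg]
  [instDStarMod : StarModule ℂ Dalg]
  [instDComplete : CompleteSpace Dalg]
  J : Type
  [instJ : Nonempty J]
  pivot : Dalg
  piA : ΩA.A →⋆ₐ[ℂ] Dalg
  piB : ΩB.A →⋆ₐ[ℂ] Dalg
  piA_inj : Function.Injective piA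
  piB_inj : Function.Injective piB
  pivot_norm : ‖pivot‖ = 1
  levelSet_nonempty : pivotLevelNonempty pivot
  anchors : J → ΩA.M
  coanchors : J → ΩB.M
  anchors_mem : ∀ j, anchors j ∈ ΩA.Ddom
  anchors_le : ∀ j, ΩA.D (anchors j) ≤ 1
  coanchors_mem : ∀ j, coanchors j ∈ ΩB.Ddom
  coanchors_le : ∀ j, ΩB.D (coanchors j) ≤ 1

attribute [instance] ModularBridge.instDRing ModularBridge.instDStarRing
  ModularBridge.instDCStar ModularBridge.instDAlg ModularBridge.instDStarMod
  ModularBridge.instDComplete ModularBridge.instJ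

namespace ModularBridge

variable {ΩA ΩB : BundledMQVB F G H}

/-- The bridge seminorm of a modular bridge. -/
def bn (γ : ModularBridge ΩA ΩB) (a : ΩA.A) (b : ΩB.A) : ℝ :=
  ‖γ.piA a * γ.pivot - γ.pivot * γ.piB b‖

/-- The deck seminorm of a modular bridge. -/
def dn (γ : ModularBridge ΩA ΩB) (ω : ΩA.M) (η : ΩB.M) : ℝ :=
  ⨆ k : γ.J,
    max (γ.bn (ΩA.inn ω (γ.anchors k)) (ΩB.inn η (γ.coanchors k)))
        (γ.bn (ΩA.inn (γ.anchors k) ω) (ΩB.inn (γ.coanchors k) η))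

/-- The basic reach of a modular bridge. -/
def basicReach (γ : ModularBridge ΩA ΩB) : ℝ :=
  max
    (sSup {r | ∃ a ∈ ΩA.base.dom, ΩA.base.L a ≤ 1 ∧
        r = sInf {s | ∃ b ∈ ΩB.base.dom, ΩB.base.L b ≤ 1 ∧ s = γ.bn a b}})
    (sSup {r | ∃ b ∈ ΩB.base.dom, ΩB.base.L b ≤ 1 ∧
        r = sInf {s | ∃ a ∈ ΩA.base.dom, ΩA.base.L a ≤ 1 ∧ s = γ.bn a b}})

/-- The modular reach of a modular bridge. -/
def modularReach (γ : ModularBridge ΩA ΩB) : ℝ :=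
  ⨆ j : γ.J, γ.dn (γ.anchors j) (γ.coanchors j)

/-- The imprint of a modular bridge. -/
def imprint (γ : ModularBridge ΩA ΩB) : ℝ :=
  max (hausDist ΩA.mkD (Set.range γ.anchors) (ΩA.Dball 1))
      (hausDist ΩB.mkD (Set.range γ.coanchors) (ΩB.Dball 1))

/-- The reach of a modular bridge. -/
def reach (γ : ModularBridge ΩA ΩB) : ℝ :=
  max γ.basicReach (γ.modularReach + γ.imprint)

/-- The states of the bridge algebra in the 1-level set of the pivot. -/
def levelStates (γ : ModularBridge ΩA ΩB) : Set (CState γ.Dalg) :=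
  {φ | φ.toFun (star (1 - γ.pivot) * (1 - γ.pivot)) = 0 ∧
       φ.toFun ((1 - γ.pivot) * star (1 - γ.pivot)) = 0}

/-- The height of a modular bridge. -/
def height (γ : ModularBridge ΩA ΩB) : ℝ :=
  max
    (hausDist (mkDist ΩA.base.dom ΩA.base.L) (Set.univ : Set (CState ΩA.A))
      {ψ | ∃ φ ∈ γ.levelStates, ∀ a : ΩA.A, ψ.toFun a = φ.toFun (γ.piA a)})
    (hausDist (mkDist ΩB.base.dom ΩB.base.L) (Set.univ : Set (CState ΩB.A))
      {ψ | ∃ φ ∈ γ.levelStates, ∀ b : ΩB.A, ψ.toFun b = φ.toFun (γ.piB b)})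

/-- The length of a modular bridge. -/
def length (γ : ModularBridge ΩA ΩB) : ℝ := max γ.reach γ.height

/-- The `l`-modular target set of `ω` for a modular bridge. -/
def mtarget (γ : ModularBridge ΩA ΩB) (ω : ΩA.M) (l : ℝ) : Set ΩB.M :=
  {η | η ∈ ΩB.Ddom ∧ ΩB.D η ≤ l ∧ γ.dn ω η ≤ l * γ.reach}

/-- The `l`-target set of `a` for a modular bridge. -/
def atarget (γ : ModularBridge ΩA ΩB) (a : ΩA.A) (l : ℝ) : Set ΩB.A :=
  {b | b ∈ ΩB.base.dom ∧ ΩB.base.L b ≤ l ∧ γ.bn a b ≤ l * γ.basicReach}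

/-- The reverse of a modular bridge. -/
def reverse (γ : ModularBridge ΩA ΩB) : ModularBridge ΩB ΩA where
  Dalg := γ.Dalg
  J := γ.J
  pivot := star γ.pivot
  piA := γ.piB
  piB := γ.piA
  piA_inj := γ.piB_inj
  piB_inj := γ.piA_inj
  pivot_norm := by rw [norm_star]; exact γ.pivot_norm
  levelSet_nonempty := by
    obtain ⟨φ, h1, h2⟩ := γ.levelSet_nonempty
    refine ⟨φ, ?_, ?_⟩
    · have e1 : star ((1 : γ.Dalg) - star γ.pivot) = 1 - γ.pivot := by
        simp [star_sub]
      have e2 : (1 : γ.Dalg) - star γ.pivot = star (1 - γ.pivot) := by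
        simp [star_sub]
      rw [e1, e2]; exact h2
    · have e1 : star ((1 : γ.Dalg) - star γ.pivot) = 1 - γ.pivot := by
        simp [star_sub]
      have e2 : (1 : γ.Dalg) - star γ.pivot = star (1 - γ.pivot) := by
        simp [star_sub]
      rw [e1, e2]; exact h1
  anchors := γ.coanchors
  coanchors := γ.anchors
  anchors_mem := γ.coanchors_mem
  anchors_le := γ.coanchors_le
  coanchors_mem := γ.anchors_mem
  coanchors_le := γ.anchors_le

end ModularBridge

/-! ### Modular treks -/

/-- A modular trek: a finite chain of composable modular bridges. -/
inductive Trek (F : ℝ → ℝ → ℝ → ℝ → ℝ) (G : ℝ → ℝ → ℝ → ℝ) (H : ℝ → ℝ → ℝ) :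
    BundledMQVB F G H → BundledMQVB F G H → Type 1
  | single {ΩA ΩB : BundledMQVB F G H} (γ : ModularBridge ΩA ΩB) : Trek F G H ΩA ΩB
  | cons {ΩA ΩB ΩC : BundledMQVB F G H} (γ : ModularBridge ΩA ΩB)
      (Γ : Trek F G H ΩB ΩC) : Trek F G H ΩA ΩC

namespace Trek

/-- The length of a modular trek: the sum of the lengths of its bridges. -/
def length : ∀ {ΩA ΩB : BundledMQVB F G H}, Trek F G H ΩA ΩB → ℝ
  | _, _, .single γ => γ.length
  | _, _, .cons γ Γ => γ.length + Trek.length Γ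

/-- The modular target set of a modular trek (the set of endpoints of `l`-itineraries). -/
def mtarget : ∀ {ΩA ΩB : BundledMQVB F G H}, Trek F G H ΩA ΩB → ΩA.M → ℝ → Set ΩB.M
  | _, _, .single γ, ω, l => γ.mtarget ω l
  | _, _, .cons γ Γ, ω, l => {η | ∃ ξ ∈ γ.mtarget ω l, η ∈ Trek.mtarget Γ ξ l}

/-- The target set of a modular trek on the base algebras. -/
def atarget : ∀ {ΩA ΩB : BundledMQVB F G H}, Trek F G H ΩA ΩB → ΩA.A → ℝ → Set ΩB.A
  | _, _, .single γ, a, l => γ.atarget a l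
  | _, _, .cons γ Γ, a, l => {b | ∃ c ∈ γ.atarget a l, b ∈ Trek.atarget Γ c l}

end Trek

/-! ### Auxiliary lemmas for Statement 11 -/

namespace BundledMQVB

variable {F : ℝ → ℝ → ℝ → ℝ → ℝ} {G : ℝ → ℝ → ℝ → ℝ} {H : ℝ → ℝ → ℝ}
variable (Ω : BundledMQVB F G H)

lemma inn_zero_left (x : Ω.M) : Ω.inn 0 x = 0 := by
  have h := Ω.inn_smul_leftC 0 0 x
  simpa using h

lemma inn_zero_right (x : Ω.M) : Ω.inn x 0 = 0 := by
  rw [← Ω.inn_star, Ω.inn_zero_left, star_zero]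

lemma inn_sub_left (x y z : Ω.M) : Ω.inn (x - y) z = Ω.inn x z - Ω.inn y z := by
  have h : x - y = x + (-1 : ℂ) • y := by
    rw [neg_one_smul, sub_eq_add_neg]
  rw [h, Ω.inn_add_left, Ω.inn_smul_leftC, neg_one_smul, sub_eq_add_neg]

lemma inn_add_right (x y z : Ω.M) : Ω.inn x (y + z) = Ω.inn x y + Ω.inn x z := by
  apply star_injective
  rw [Ω.inn_star, star_add, Ω.inn_star, Ω.inn_star, Ω.inn_add_left]

lemma inn_sub_right (x y z : Ω.M) : Ω.inn x (y - z) = Ω.inn x y - Ω.inn x z := by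
  apply star_injective
  rw [Ω.inn_star, star_sub, Ω.inn_star, Ω.inn_star, Ω.inn_sub_left]

lemma inn_smulC_right (c : ℂ) (x y : Ω.M) :
    Ω.inn x (c • y) = (starRingEnd ℂ c) • Ω.inn x y := by
  apply star_injective
  rw [Ω.inn_star, star_smul, Ω.inn_star, Ω.inn_smul_leftC]
  simp [Complex.star_def]

lemma inn_smulA_right (a : Ω.A) (x y : Ω.M) :
    Ω.inn x (a • y) = Ω.inn x y * star a := by
  apply star_injective
  rw [Ω.inn_star, star_mul, star_star, Ω.inn_star, Ω.inn_smul_left]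

private lemma coe_smul_eq (s : ℝ) (a : Ω.A) : (s : ℂ) • a = s • a := by
  rw [← Complex.coe_algebraMap, algebraMap_smul]

/-- Cauchy-Schwarz inequality for the `A`-valued inner product. -/
lemma cs (x y : Ω.M) : ‖Ω.inn x y‖ ≤ ‖x‖ * ‖y‖ := by
  letI : CStarAlgebra Ω.A := {}
  letI : PartialOrder Ω.A := CStarAlgebra.spectralOrder Ω.A
  haveI : StarOrderedRing Ω.A := CStarAlgebra.spectralOrderedRing Ω.A
  set b := Ω.inn x y with hb
  set X := Ω.inn x x with hX
  set Y := Ω.inn y y with hYdef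
  have hYsa : IsSelfAdjoint Y := Ω.inn_star y y
  by_cases hY0 : Y = 0
  · have hy : y = 0 := Ω.inn_definite y hY0
    have : b = 0 := by rw [hb, hy, Ω.inn_zero_right]
    rw [this, norm_zero]
    positivity
  · set r := ‖Y‖ with hr
    have hrpos : 0 < r := norm_pos_iff.mpr hY0
    set z : Ω.M := b • y - (r : ℂ) • x with hz
    have hyx : Ω.inn y x = star b := by rw [hb, Ω.inn_star]
    have e_yz : Ω.inn y z = Y * star b - (r : ℂ) • star b := by
      rw [hz, Ω.inn_sub_right, Ω.inn_smulA_right, Ω.inn_smulC_right, Complex.conj_ofReal, hyx,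
        ← hYdef]
    have e_xz : Ω.inn x z = b * star b - (r : ℂ) • X := by
      rw [hz, Ω.inn_sub_right, Ω.inn_smulA_right, Ω.inn_smulC_right, Complex.conj_ofReal, ← hb,
        ← hX]
    have eQ : Ω.inn z z = b * Y * star b - (2 * r) • (b * star b) + (r * r) • X := by
      rw [show Ω.inn z z = Ω.inn (b • y) z - Ω.inn ((r : ℂ) • x) z by rw [hz, Ω.inn_sub_left],
        Ω.inn_smul_left, Ω.inn_smul_leftC, e_yz, e_xz]
      rw [mul_sub, smul_sub, mul_smul_comm, smul_smul, ← mul_assoc]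
      rw [← Ω.coe_smul_eq (2 * r), ← Ω.coe_smul_eq (r * r)]
      push_cast
      module
    have hQ0 : (0 : Ω.A) ≤ Ω.inn z z := by
      obtain ⟨c, hc⟩ := Ω.inn_pos z
      rw [hc]
      exact star_mul_self_nonneg c
    rw [eQ, sub_add_eq_add_sub] at hQ0
    have h1 : (2 * r) • (b * star b) ≤ b * Y * star b + (r * r) • X := sub_nonneg.mp hQ0
    have h2 : b * Y * star b ≤ r • (b * star b) := by
      have hYle : Y ≤ algebraMap ℝ Ω.A r := hYsa.le_algebraMap_norm_self
      have h := star_right_conjugate_le_conjugate hYle b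
      calc b * Y * star b ≤ b * algebraMap ℝ Ω.A r * star b := h
        _ = r • (b * star b) := by
            rw [Algebra.algebraMap_eq_smul_one, mul_smul_comm, mul_one, smul_mul_assoc]
    have h5 : r • (b * star b) ≤ (r * r) • X := by
      have h12 : (2 * r) • (b * star b) ≤ r • (b * star b) + (r * r) • X :=
        le_trans h1 (add_le_add_left h2 _)
      rw [show (2 * r) • (b * star b) = r • (b * star b) + r • (b * star b) by
        rw [two_mul, add_smul]] at h12
      exact le_of_add_le_add_left h12
    have h4 : (0 : Ω.A) ≤ r • (b * star b) := by
      have h40 := mul_star_self_nonneg ((Real.sqrt r : ℂ) • b)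
      have heq : ((Real.sqrt r : ℂ) • b) * star ((Real.sqrt r : ℂ) • b) = r • (b * star b) := by
        rw [star_smul, smul_mul_assoc, mul_smul_comm, smul_smul]
        rw [show star ((Real.sqrt r : ℂ)) = ((Real.sqrt r : ℂ)) by
          simp [Complex.star_def, Complex.conj_ofReal]]
        rw [← Complex.ofReal_mul, Real.mul_self_sqrt hrpos.le, Ω.coe_smul_eq]
      rw [← heq]
      exact h40
    have hnorm := CStarAlgebra.norm_le_norm_of_nonneg_of_le h4 h5
    rw [norm_smul, norm_smul, CStarRing.norm_self_mul_star, Real.norm_eq_abs, Real.norm_eq_abs,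
      abs_of_nonneg hrpos.le, abs_of_nonneg (by positivity : (0:ℝ) ≤ r * r)] at hnorm
    have hb2 : ‖b‖ * ‖b‖ ≤ r * ‖X‖ := by
      have := hnorm
      nlinarith [hrpos, norm_nonneg X]
    rw [Ω.norm_eq x, Ω.norm_eq y, ← hX, ← hYdef, ← hr, ← Real.sqrt_mul (norm_nonneg X) r]
    rw [show ‖b‖ = Real.sqrt (‖b‖ * ‖b‖) from (Real.sqrt_mul_self (norm_nonneg b)).symm]
    exact Real.sqrt_le_sqrt (by linarith)

lemma zero_mem_Dball : (0 : Ω.M) ∈ Ω.Dball 1 := by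
  obtain ⟨m, hm⟩ := Ω.Ddom_dense.nonempty
  have h0 : ((0 : ℂ) • m) ∈ Ω.Ddom := Ω.Ddom_smul 0 m hm
  have hD : Ω.D ((0 : ℂ) • m) = 0 := by rw [Ω.D_smul 0 m hm]; simp
  rw [zero_smul] at h0 hD
  exact ⟨h0, by rw [hD]; norm_num⟩

lemma norm_le_one_of_mem_Dball {ω : Ω.M} (h : ω ∈ Ω.Dball 1) : ‖ω‖ ≤ 1 :=
  (Ω.norm_le_D ω h.1).trans h.2

lemma mkD_elt_le {x y : Ω.M} {ξ : Ω.M} (hmem : ξ ∈ Ω.Ddom) (hle : Ω.D ξ ≤ 1) :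
    ‖Ω.inn x ξ - Ω.inn y ξ‖ ≤ ‖x - y‖ := by
  rw [← Ω.inn_sub_left]
  calc ‖Ω.inn (x - y) ξ‖ ≤ ‖x - y‖ * ‖ξ‖ := Ω.cs _ _
    _ ≤ ‖x - y‖ * 1 := by
        refine mul_le_mul_of_nonneg_left ?_ (norm_nonneg _)
        exact Ω.norm_le_one_of_mem_Dball ⟨hmem, hle⟩
    _ = ‖x - y‖ := mul_one _

lemma mkD_bddAbove (x y : Ω.M) :
    BddAbove {r | ∃ ξ ∈ Ω.Ddom, Ω.D ξ ≤ 1 ∧ r = ‖Ω.inn x ξ - Ω.inn y ξ‖} := by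
  refine ⟨‖x - y‖, ?_⟩
  rintro r ⟨ξ, hmem, hle, rfl⟩
  exact Ω.mkD_elt_le hmem hle

lemma mkD_set_nonempty (x y : Ω.M) :
    Set.Nonempty {r | ∃ ξ ∈ Ω.Ddom, Ω.D ξ ≤ 1 ∧ r = ‖Ω.inn x ξ - Ω.inn y ξ‖} := by
  obtain ⟨h0, hD0⟩ := Ω.zero_mem_Dball
  exact ⟨0, 0, h0, hD0, by rw [Ω.inn_zero_right, Ω.inn_zero_right, sub_zero, norm_zero]⟩

lemma le_mkD (x y : Ω.M) {ξ : Ω.M} (hmem : ξ ∈ Ω.Ddom) (hle : Ω.D ξ ≤ 1) :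
    ‖Ω.inn x ξ - Ω.inn y ξ‖ ≤ Ω.mkD x y :=
  le_csSup (Ω.mkD_bddAbove x y) ⟨ξ, hmem, hle, rfl⟩

lemma mkD_nonneg (x y : Ω.M) : 0 ≤ Ω.mkD x y := by
  obtain ⟨h0, hD0⟩ := Ω.zero_mem_Dball
  have := Ω.le_mkD x y h0 hD0
  calc (0:ℝ) ≤ ‖Ω.inn x 0 - Ω.inn y 0‖ := norm_nonneg _
    _ ≤ Ω.mkD x y := this

lemma mkD_le_norm (x y : Ω.M) : Ω.mkD x y ≤ ‖x - y‖ := by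
  refine Real.sSup_le ?_ (norm_nonneg _)
  rintro r ⟨ξ, hmem, hle, rfl⟩
  exact Ω.mkD_elt_le hmem hle

lemma mkD_self (x : Ω.M) : Ω.mkD x x = 0 := by
  refine le_antisymm ?_ (Ω.mkD_nonneg x x)
  refine Real.sSup_le ?_ le_rfl
  rintro r ⟨ξ, hmem, hle, rfl⟩
  simp

lemma mkD_perturb (x x' y : Ω.M) : Ω.mkD x' y ≤ Ω.mkD x y + ‖x' - x‖ := by
  refine Real.sSup_le ?_ (add_nonneg (Ω.mkD_nonneg x y) (norm_nonneg _))
  rintro r ⟨ξ, hmem, hle, rfl⟩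
  have key : ‖Ω.inn x' ξ - Ω.inn y ξ‖ ≤ ‖Ω.inn x ξ - Ω.inn y ξ‖ + ‖Ω.inn x' ξ - Ω.inn x ξ‖ := by
    have : Ω.inn x' ξ - Ω.inn y ξ = (Ω.inn x ξ - Ω.inn y ξ) + (Ω.inn x' ξ - Ω.inn x ξ) := by abel
    rw [this]
    exact norm_add_le _ _
  refine key.trans (add_le_add (Ω.le_mkD x y hmem hle) ?_)
  exact Ω.mkD_elt_le hmem hle

end BundledMQVB

namespace ModularBridge

variable {F : ℝ → ℝ → ℝ → ℝ → ℝ} {G : ℝ → ℝ → ℝ → ℝ} {H : ℝ → ℝ → ℝ}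
variable {ΩA ΩB : BundledMQVB F G H}

lemma bn_le_norms (γ : ModularBridge ΩA ΩB) (a : ΩA.A) (b : ΩB.A) :
    γ.bn a b ≤ ‖a‖ + ‖b‖ := by
  letI : CStarAlgebra ΩA.A := {}
  letI : CStarAlgebra ΩB.A := {}
  letI : CStarAlgebra γ.Dalg := {}
  calc γ.bn a b ≤ ‖γ.piA a * γ.pivot‖ + ‖γ.pivot * γ.piB b‖ := norm_sub_le _ _
    _ ≤ ‖γ.piA a‖ * ‖γ.pivot‖ + ‖γ.pivot‖ * ‖γ.piB b‖ :=
        add_le_add (norm_mul_le _ _) (norm_mul_le _ _)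
    _ ≤ ‖a‖ + ‖b‖ := by
        rw [γ.pivot_norm, mul_one, one_mul]
        exact add_le_add (NonUnitalStarAlgHom.norm_apply_le γ.piA a)
          (NonUnitalStarAlgHom.norm_apply_le γ.piB b)

lemma bn_inn_le_two (γ : ModularBridge ΩA ΩB) {ω ωk : ΩA.M} {η ηk : ΩB.M}
    (hω : ‖ω‖ ≤ 1) (hωk : ‖ωk‖ ≤ 1) (hη : ‖η‖ ≤ 1) (hηk : ‖ηk‖ ≤ 1) :
    γ.bn (ΩA.inn ω ωk) (ΩB.inn η ηk) ≤ 2 := by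
  refine (γ.bn_le_norms _ _).trans ?_
  have hA : ‖ΩA.inn ω ωk‖ ≤ 1 := by
    calc ‖ΩA.inn ω ωk‖ ≤ ‖ω‖ * ‖ωk‖ := ΩA.cs ω ωk
      _ ≤ 1 := by nlinarith [norm_nonneg ω, norm_nonneg ωk]
  have hB : ‖ΩB.inn η ηk‖ ≤ 1 := by
    calc ‖ΩB.inn η ηk‖ ≤ ‖η‖ * ‖ηk‖ := ΩB.cs η ηk
      _ ≤ 1 := by nlinarith [norm_nonneg η, norm_nonneg ηk]
  linarith

lemma dn_term_le_two (γ : ModularBridge ΩA ΩB) {ω : ΩA.M} {η : ΩB.M}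
    (hω : ω ∈ ΩA.Dball 1) (hη : η ∈ ΩB.Dball 1) (k : γ.J) :
    max (γ.bn (ΩA.inn ω (γ.anchors k)) (ΩB.inn η (γ.coanchors k)))
        (γ.bn (ΩA.inn (γ.anchors k) ω) (ΩB.inn (γ.coanchors k) η)) ≤ 2 := by
  have h1 : ‖ω‖ ≤ 1 := ΩA.norm_le_one_of_mem_Dball hω
  have h2 : ‖η‖ ≤ 1 := ΩB.norm_le_one_of_mem_Dball hη
  have h3 : ‖γ.anchors k‖ ≤ 1 :=
    ΩA.norm_le_one_of_mem_Dball ⟨γ.anchors_mem k, γ.anchors_le k⟩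
  have h4 : ‖γ.coanchors k‖ ≤ 1 :=
    ΩB.norm_le_one_of_mem_Dball ⟨γ.coanchors_mem k, γ.coanchors_le k⟩
  exact max_le (γ.bn_inn_le_two h1 h3 h2 h4) (γ.bn_inn_le_two h3 h1 h4 h2)

lemma dn_le_two (γ : ModularBridge ΩA ΩB) {ω : ΩA.M} {η : ΩB.M}
    (hω : ω ∈ ΩA.Dball 1) (hη : η ∈ ΩB.Dball 1) :
    γ.dn ω η ≤ 2 := by
  haveI := γ.instJ
  exact ciSup_le fun k => γ.dn_term_le_two hω hη k

lemma dn_bddAbove (γ : ModularBridge ΩA ΩB) {ω : ΩA.M} {η : ΩB.M}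
    (hω : ω ∈ ΩA.Dball 1) (hη : η ∈ ΩB.Dball 1) :
    BddAbove (Set.range fun k : γ.J =>
      max (γ.bn (ΩA.inn ω (γ.anchors k)) (ΩB.inn η (γ.coanchors k)))
          (γ.bn (ΩA.inn (γ.anchors k) ω) (ΩB.inn (γ.coanchors k) η))) := by
  refine ⟨2, ?_⟩
  rintro r ⟨k, rfl⟩
  exact γ.dn_term_le_two hω hη k

lemma modularReach_bddAbove (γ : ModularBridge ΩA ΩB) :
    BddAbove (Set.range fun j : γ.J => γ.dn (γ.anchors j) (γ.coanchors j)) := by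
  refine ⟨2, ?_⟩
  rintro r ⟨j, rfl⟩
  exact γ.dn_le_two ⟨γ.anchors_mem j, γ.anchors_le j⟩ ⟨γ.coanchors_mem j, γ.coanchors_le j⟩

end ModularBridge

section HausDistAux

variable {F : ℝ → ℝ → ℝ → ℝ → ℝ} {G : ℝ → ℝ → ℝ → ℝ} {H : ℝ → ℝ → ℝ}

/-- The first component of the Hausdorff distance from a family inside the ball to the
ball vanishes. -/
lemma comp1_eq_zero (Ω : BundledMQVB F G H) {ι : Type*} [Nonempty ι]
    (g : ι → Ω.M) (hg : ∀ i, g i ∈ Ω.Dball 1) :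
    sSup {r | ∃ x ∈ Set.range g, r = sInf {s | ∃ y ∈ Ω.Dball 1, s = Ω.mkD x y}} = 0 := by
  have hinf : ∀ i : ι, sInf {s | ∃ y ∈ Ω.Dball 1, s = Ω.mkD (g i) y} = 0 := by
    intro i
    refine le_antisymm ?_ ?_
    · refine csInf_le ⟨0, ?_⟩ ⟨g i, hg i, (Ω.mkD_self (g i)).symm⟩
      rintro s ⟨y, hy, rfl⟩
      exact Ω.mkD_nonneg _ _
    · refine le_csInf ⟨Ω.mkD (g i) (g i), g i, hg i, rfl⟩ ?_
      rintro s ⟨y, hy, rfl⟩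
      exact Ω.mkD_nonneg _ _
  have hset : {r | ∃ x ∈ Set.range g, r = sInf {s | ∃ y ∈ Ω.Dball 1, s = Ω.mkD x y}} = {0} := by
    ext r
    constructor
    · rintro ⟨x, ⟨i, rfl⟩, rfl⟩
      exact hinf i
    · rintro rfl
      exact ⟨g (Classical.arbitrary ι), ⟨Classical.arbitrary ι, rfl⟩, (hinf _).symm⟩
  rw [hset, csSup_singleton]

private lemma infSetAux (Ω : BundledMQVB F G H) {κ : Type*} [Nonempty κ]
    (g : κ → Ω.M) (y : Ω.M) :
    ({s | ∃ x ∈ Set.range g, s = Ω.mkD x y}).Nonempty ∧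
      BddBelow {s | ∃ x ∈ Set.range g, s = Ω.mkD x y} := by
  refine ⟨⟨Ω.mkD (g (Classical.arbitrary κ)) y, g (Classical.arbitrary κ),
    ⟨Classical.arbitrary κ, rfl⟩, rfl⟩, ⟨0, ?_⟩⟩
  rintro s ⟨x, hx, rfl⟩
  exact Ω.mkD_nonneg _ _

/-- Replacing a family of anchors by an `ε`-net increases the imprint-type Hausdorff
distance by at most `ε`. -/
lemma hausDist_net_le (Ω : BundledMQVB F G H) {ι ι' : Type*} [Nonempty ι] [Nonempty ι']
    (f : ι → Ω.M) (f' : ι' → Ω.M)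
    (hf : ∀ i, f i ∈ Ω.Dball 1) (hf' : ∀ i, f' i ∈ Ω.Dball 1)
    {ε : ℝ} (hε : 0 < ε)
    (hnet : ∀ i : ι, ∃ i' : ι', ‖f i - f' i'‖ ≤ ε) :
    hausDist Ω.mkD (Set.range f') (Ω.Dball 1) ≤
      hausDist Ω.mkD (Set.range f) (Ω.Dball 1) + ε := by
  have i₀ : ι := Classical.arbitrary ι
  have i₀' : ι' := Classical.arbitrary ι'
  -- the target is nonnegative
  have hRHS : 0 ≤ hausDist Ω.mkD (Set.range f) (Ω.Dball 1) + ε := by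
    have h1 := comp1_eq_zero Ω f hf
    have : (0:ℝ) ≤ hausDist Ω.mkD (Set.range f) (Ω.Dball 1) := by
      rw [hausDist, ← h1]
      exact le_max_left _ _
    linarith
  rw [hausDist]
  refine max_le ?_ ?_
  · rw [comp1_eq_zero Ω f' hf']
    exact hRHS
  -- second component
  · refine Real.sSup_le ?_ hRHS
    rintro r ⟨y, hy, rfl⟩
    -- bound by the corresponding infimum over the original family plus ε
    have hstep : sInf {s | ∃ x ∈ Set.range f', s = Ω.mkD x y} ≤
        sInf {s | ∃ x ∈ Set.range f, s = Ω.mkD x y} + ε := by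
      rw [← sub_le_iff_le_add]
      refine le_csInf (infSetAux Ω f y).1 ?_
      rintro s ⟨x, ⟨i, rfl⟩, rfl⟩
      obtain ⟨i', hi'⟩ := hnet i
      rw [sub_le_iff_le_add]
      calc sInf {s | ∃ x ∈ Set.range f', s = Ω.mkD x y} ≤ Ω.mkD (f' i') y :=
            csInf_le (infSetAux Ω f' y).2 ⟨f' i', ⟨i', rfl⟩, rfl⟩
        _ ≤ Ω.mkD (f i) y + ‖f' i' - f i‖ := Ω.mkD_perturb (f i) (f' i') y
        _ ≤ Ω.mkD (f i) y + ε := by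
            rw [← norm_sub_rev]
            exact add_le_add_right hi' _
    refine hstep.trans (add_le_add_left ?_ ε)
    -- the infimum over the original family is at most the original Hausdorff distance
    have hbdd : BddAbove {r | ∃ y ∈ Ω.Dball 1, r = sInf {s | ∃ x ∈ Set.range f, s = Ω.mkD x y}} := by
      refine ⟨2, ?_⟩
      rintro r ⟨y', hy', rfl⟩
      calc sInf {s | ∃ x ∈ Set.range f, s = Ω.mkD x y'} ≤ Ω.mkD (f i₀) y' :=
            csInf_le (infSetAux Ω f y').2 ⟨f i₀, ⟨i₀, rfl⟩, rfl⟩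
        _ ≤ ‖f i₀ - y'‖ := Ω.mkD_le_norm _ _
        _ ≤ ‖f i₀‖ + ‖y'‖ := norm_sub_le _ _
        _ ≤ 2 := by
            have := Ω.norm_le_one_of_mem_Dball (hf i₀)
            have := Ω.norm_le_one_of_mem_Dball hy'
            linarith
    calc sInf {s | ∃ x ∈ Set.range f, s = Ω.mkD x y} ≤
        sSup {r | ∃ y ∈ Ω.Dball 1, r = sInf {s | ∃ x ∈ Set.range f, s = Ω.mkD x y}} :=
          le_csSup hbdd ⟨y, hy, rfl⟩
      _ ≤ hausDist Ω.mkD (Set.range f) (Ω.Dball 1) := le_max_right _ _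

end HausDistAux

namespace ModularBridge

variable {F : ℝ → ℝ → ℝ → ℝ → ℝ} {G : ℝ → ℝ → ℝ → ℝ} {H : ℝ → ℝ → ℝ}
variable {ΩA ΩB : BundledMQVB F G H}

/-- Replacing the anchors and co-anchors of a modular bridge by families forming an `ε`-net
among the original ones increases the length by at most `ε`. -/
lemma length_mk_le (γ : ModularBridge ΩA ΩB)
    {J' : Type} (hJ' : Nonempty J')
    (anch : J' → ΩA.M) (coanch : J' → ΩB.M)
    (h1 : ∀ j, anch j ∈ ΩA.Ddom) (h2 : ∀ j, ΩA.D (anch j) ≤ 1)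
    (h3 : ∀ j, coanch j ∈ ΩB.Ddom) (h4 : ∀ j, ΩB.D (coanch j) ≤ 1)
    {ε : ℝ} (hε : 0 < ε)
    (hpair : ∀ p : J', ∃ j : γ.J, γ.anchors j = anch p ∧ γ.coanchors j = coanch p)
    (hnetA : ∀ j : γ.J, ∃ p : J', ‖γ.anchors j - anch p‖ ≤ ε)
    (hnetB : ∀ j : γ.J, ∃ p : J', ‖γ.coanchors j - coanch p‖ ≤ ε) :
    (ModularBridge.mk (Dalg := γ.Dalg) (J := J') (instJ := hJ') (pivot := γ.pivot)
        (piA := γ.piA) (piB := γ.piB) (piA_inj := γ.piA_inj) (piB_inj := γ.piB_inj)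
        (pivot_norm := γ.pivot_norm) (levelSet_nonempty := γ.levelSet_nonempty)
        (anchors := anch) (coanchors := coanch) (anchors_mem := h1) (anchors_le := h2)
        (coanchors_mem := h3) (coanchors_le := h4) :
      ModularBridge ΩA ΩB).length ≤ γ.length + ε := by
  haveI := γ.instJ
  haveI := hJ'
  show max (max γ.basicReach
      ((⨆ p : J', ⨆ k : J',
          max (γ.bn (ΩA.inn (anch p) (anch k)) (ΩB.inn (coanch p) (coanch k)))
              (γ.bn (ΩA.inn (anch k) (anch p)) (ΩB.inn (coanch k) (coanch p)))) +
        max (hausDist ΩA.mkD (Set.range anch) (ΩA.Dball 1))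
            (hausDist ΩB.mkD (Set.range coanch) (ΩB.Dball 1))))
      γ.height ≤ γ.length + ε
  -- modular reach estimate
  have hmr : (⨆ p : J', ⨆ k : J',
      max (γ.bn (ΩA.inn (anch p) (anch k)) (ΩB.inn (coanch p) (coanch k)))
          (γ.bn (ΩA.inn (anch k) (anch p)) (ΩB.inn (coanch k) (coanch p)))) ≤
      γ.modularReach := by
    refine ciSup_le fun p => ciSup_le fun k => ?_
    obtain ⟨jp, hjp1, hjp2⟩ := hpair p
    obtain ⟨jk, hjk1, hjk2⟩ := hpair k
    rw [← hjp1, ← hjp2, ← hjk1, ← hjk2]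
    calc max (γ.bn (ΩA.inn (γ.anchors jp) (γ.anchors jk))
            (ΩB.inn (γ.coanchors jp) (γ.coanchors jk)))
          (γ.bn (ΩA.inn (γ.anchors jk) (γ.anchors jp))
            (ΩB.inn (γ.coanchors jk) (γ.coanchors jp)))
        ≤ γ.dn (γ.anchors jp) (γ.coanchors jp) :=
          le_ciSup (γ.dn_bddAbove ⟨γ.anchors_mem jp, γ.anchors_le jp⟩
            ⟨γ.coanchors_mem jp, γ.coanchors_le jp⟩) jk
      _ ≤ γ.modularReach := le_ciSup γ.modularReach_bddAbove jp
  -- imprint estimate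
  have himpA : hausDist ΩA.mkD (Set.range anch) (ΩA.Dball 1) ≤
      hausDist ΩA.mkD (Set.range γ.anchors) (ΩA.Dball 1) + ε :=
    hausDist_net_le ΩA γ.anchors anch (fun j => ⟨γ.anchors_mem j, γ.anchors_le j⟩)
      (fun p => ⟨h1 p, h2 p⟩) hε hnetA
  have himpB : hausDist ΩB.mkD (Set.range coanch) (ΩB.Dball 1) ≤
      hausDist ΩB.mkD (Set.range γ.coanchors) (ΩB.Dball 1) + ε :=
    hausDist_net_le ΩB γ.coanchors coanch (fun j => ⟨γ.coanchors_mem j, γ.coanchors_le j⟩)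
      (fun p => ⟨h3 p, h4 p⟩) hε hnetB
  have himp : max (hausDist ΩA.mkD (Set.range anch) (ΩA.Dball 1))
      (hausDist ΩB.mkD (Set.range coanch) (ΩB.Dball 1)) ≤ γ.imprint + ε := by
    refine max_le (himpA.trans (add_le_add_left ?_ ε)) (himpB.trans (add_le_add_left ?_ ε))
    · exact le_max_left _ _
    · exact le_max_right _ _
  have hbasic : γ.basicReach ≤ γ.length := by
    refine le_trans ?_ (show γ.reach ≤ max γ.reach γ.height from le_max_left _ _)
    exact le_max_left _ _
  have hreach_le : γ.modularReach + γ.imprint ≤ γ.length := by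
    refine le_trans ?_ (show γ.reach ≤ max γ.reach γ.height from le_max_left _ _)
    exact le_max_right _ _
  have hheight : γ.height ≤ γ.length := le_max_right _ _
  refine max_le (max_le (by linarith) ?_) (by linarith)
  calc _ ≤ γ.modularReach + (γ.imprint + ε) := add_le_add hmr himp
    _ = (γ.modularReach + γ.imprint) + ε := by ring
    _ ≤ γ.length + ε := add_le_add_left hreach_le ε

end ModularBridge

/-- for every `ε > 0` there is a modular bridge with the same bridge algebra,
pivot and embeddings as `γ`, with finitely many anchors and co-anchors, and of length at
most `λ(γ) + ε`. -/
theorem statement11 {F : ℝ → ℝ → ℝ → ℝ → ℝ} {G : ℝ → ℝ → ℝ → ℝ} {H : ℝ → ℝ → ℝ}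
    (hFGH : AdmissibleTriple F G H)
    {ΩA ΩB : BundledMQVB F G H} (γ : ModularBridge ΩA ΩB) (ε : ℝ) (hε : 0 < ε) :
    ∃ (J' : Type) (hJ' : Nonempty J') (_ : Finite J')
      (anch : J' → ΩA.M) (coanch : J' → ΩB.M)
      (h1 : ∀ j, anch j ∈ ΩA.Ddom) (h2 : ∀ j, ΩA.D (anch j) ≤ 1)
      (h3 : ∀ j, coanch j ∈ ΩB.Ddom) (h4 : ∀ j, ΩB.D (coanch j) ≤ 1),
      (ModularBridge.mk (Dalg := γ.Dalg) (J := J') (instJ := hJ') (pivot := γ.pivot)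
          (piA := γ.piA) (piB := γ.piB) (piA_inj := γ.piA_inj) (piB_inj := γ.piB_inj)
          (pivot_norm := γ.pivot_norm) (levelSet_nonempty := γ.levelSet_nonempty)
          (anchors := anch) (coanchors := coanch) (anchors_mem := h1) (anchors_le := h2)
          (coanchors_mem := h3) (coanchors_le := h4) :
        ModularBridge ΩA ΩB).length ≤ γ.length + ε := by
  classical
  haveI := γ.instJ
  set P : γ.J → ΩA.M × ΩB.M := fun j => (γ.anchors j, γ.coanchors j) with hP
  have hsub : Set.range P ⊆ (ΩA.Dball 1) ×ˢ (ΩB.Dball 1) := by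
    rintro _ ⟨j, rfl⟩
    exact ⟨⟨γ.anchors_mem j, γ.anchors_le j⟩, ⟨γ.coanchors_mem j, γ.coanchors_le j⟩⟩
  have hcomp : IsCompact ((ΩA.Dball 1) ×ˢ (ΩB.Dball 1)) :=
    IsCompact.prod ΩA.D_ball_compact ΩB.D_ball_compact
  have htb : TotallyBounded (Set.range P) := (hcomp.totallyBounded).subset hsub
  obtain ⟨t, hts, htfin, hcov⟩ :=
    totallyBounded_iff_subset.mp htb _ (Metric.dist_mem_uniformity hε)
  have htne : t.Nonempty := by
    obtain ⟨q, hq, -⟩ := Set.mem_iUnion₂.mp (hcov ⟨Classical.arbitrary γ.J, rfl⟩)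
    exact ⟨q, hq⟩
  haveI hJ' : Nonempty ↥t := htne.to_subtype
  haveI hJf : Finite ↥t := htfin.to_subtype
  have hmem : ∀ p : ↥t, (p : ΩA.M × ΩB.M).1 ∈ ΩA.Dball 1 ∧ (p : ΩA.M × ΩB.M).2 ∈ ΩB.Dball 1 :=
    fun p => hsub (hts p.2)
  have hpair : ∀ p : ↥t, ∃ j : γ.J,
      γ.anchors j = (p : ΩA.M × ΩB.M).1 ∧ γ.coanchors j = (p : ΩA.M × ΩB.M).2 := by
    intro p
    obtain ⟨j, hj⟩ := hts p.2
    exact ⟨j, by rw [← hj], by rw [← hj]⟩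
  have hnet : ∀ j : γ.J, ∃ p : ↥t,
      ‖γ.anchors j - (p : ΩA.M × ΩB.M).1‖ ≤ ε ∧ ‖γ.coanchors j - (p : ΩA.M × ΩB.M).2‖ ≤ ε := by
    intro j
    obtain ⟨q, hq, hdq⟩ := Set.mem_iUnion₂.mp (hcov ⟨j, rfl⟩)
    have hdq' : dist (P j) q < ε := hdq
    refine ⟨⟨q, hq⟩, ?_, ?_⟩
    · rw [← dist_eq_norm]
      refine le_trans ?_ hdq'.le
      rw [Prod.dist_eq]
      exact le_max_left _ _
    · rw [← dist_eq_norm]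
      refine le_trans ?_ hdq'.le
      rw [Prod.dist_eq]
      exact le_max_right _ _
  exact ⟨↥t, hJ', hJf, fun p => (p : ΩA.M × ΩB.M).1, fun p => (p : ΩA.M × ΩB.M).2,
    fun p => (hmem p).1.1, fun p => (hmem p).1.2, fun p => (hmem p).2.1, fun p => (hmem p).2.2,
    γ.length_mk_le hJ' _ _ _ _ _ _ hε hpair
      (fun j => ⟨(hnet j).choose, (hnet j).choose_spec.1⟩)
      (fun j => ⟨(hnet j).choose, (hnet j).choose_spec.2⟩)⟩
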